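/- Let V be an open subset of ℝᵈ containing an open ball of radius ρ/2, Λ ⊆ V with Hausdorff distance ε = sup_{y∈V} inf_{x∈Λ} ‖y - x‖, and ψ : Λ → Q an isotonic map into a bounded set Q ⊆ ℝᵈ (i.e., ‖x-y‖ < ‖x'-y'‖ implies ‖ψ(x)-ψ(y)‖ ≤ ‖ψ(x')-ψ(y')‖ for all x,y,x',y' ∈ Λ). Then there is a constant C, proportional to diam(Q)/ρ and depending only on d, such that ‖ψ(x) - ψ(x')‖ ≤ C(‖x - x'‖ + ε) for all x, x' ∈ Λ. -/

import Mathlib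

open Metric MeasureTheory

lemma packing_aux {d : ℕ} (hd : d ≠ 0) (P : Finset (EuclideanSpace ℝ (Fin d)))
    {t D : ℝ} (ht : 0 < t) (hD : 0 ≤ D)
    (hsep : ∀ p ∈ P, ∀ q ∈ P, p ≠ q → t ≤ dist p q)
    (hdiam : ∀ p ∈ P, ∀ q ∈ P, dist p q ≤ D) :
    (P.card : ℝ) * (t / 2) ^ d ≤ (D + t / 2) ^ d := by
  rcases P.eq_empty_or_nonempty with rfl | ⟨c, hc⟩
  · simp only [Finset.card_empty, Nat.cast_zero, zero_mul]
    exact pow_nonneg (by linarith) d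
  have hd1 : 1 ≤ d := Nat.one_le_iff_ne_zero.mpr hd
  have hnt : (EuclideanSpace.single (⟨0, hd1⟩ : Fin d) (1:ℝ)) ≠ 0 := by
    intro h
    have := congrArg (fun f : EuclideanSpace ℝ (Fin d) => f (⟨0, hd1⟩ : Fin d)) h
    simp [EuclideanSpace.single_apply] at this
  haveI : Nontrivial (EuclideanSpace ℝ (Fin d)) := ⟨_, _, hnt⟩
  have hdisj : (P : Set (EuclideanSpace ℝ (Fin d))).PairwiseDisjoint (fun p => ball p (t / 2)) := by
    intro p hp q hq hpq
    exact Metric.ball_disjoint_ball (by linarith [hsep p hp q hq hpq])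
  have hmeas : ∀ p ∈ P, MeasurableSet (ball p (t / 2)) := fun p _ => measurableSet_ball
  have hsub : (⋃ p ∈ P, ball p (t / 2)) ⊆ ball c (D + t / 2) := by
    intro y hy
    simp only [Set.mem_iUnion] at hy
    obtain ⟨p, hp, hyp⟩ := hy
    have := hdiam p hp c hc
    have : dist y c < D + t/2 := by
      calc dist y c ≤ dist y p + dist p c := dist_triangle _ _ _
        _ < t/2 + D := by have := mem_ball.mp hyp; linarith [hdiam p hp c hc]
        _ = D + t/2 := by ring
    exact mem_ball.mpr this
  have key : ∑ p ∈ P, volume (ball p (t/2)) ≤ volume (ball c (D + t/2)) := by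
    rw [← measure_biUnion_finset hdisj hmeas]
    exact measure_mono hsub
  have hball : ∀ p : EuclideanSpace ℝ (Fin d),
      volume (ball p (t/2)) = ENNReal.ofReal ((t/2) ^ d) * volume (ball (0:EuclideanSpace ℝ (Fin d)) 1) := by
    intro p
    rw [Measure.addHaar_ball volume p (by positivity : (0:ℝ) ≤ t/2), finrank_euclideanSpace_fin]
  have hballc : volume (ball c (D + t/2)) = ENNReal.ofReal ((D + t/2) ^ d) * volume (ball (0:EuclideanSpace ℝ (Fin d)) 1) := by
    rw [Measure.addHaar_ball volume c (by positivity : (0:ℝ) ≤ D + t/2), finrank_euclideanSpace_fin]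
  simp only [hball, hballc, Finset.sum_const, nsmul_eq_mul] at key
  have hvpos : 0 < volume (ball (0:EuclideanSpace ℝ (Fin d)) 1) := measure_ball_pos _ _ one_pos
  have hvlt : volume (ball (0:EuclideanSpace ℝ (Fin d)) 1) < ⊤ := measure_ball_lt_top
  have key2 : (P.card : ENNReal) * ENNReal.ofReal ((t/2) ^ d) ≤ ENNReal.ofReal ((D + t/2) ^ d) := by
    rw [← ENNReal.mul_le_mul_iff_left hvpos.ne' hvlt.ne]
    calc (P.card : ENNReal) * ENNReal.ofReal ((t/2) ^ d) * volume (ball (0:EuclideanSpace ℝ (Fin d)) 1)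
        = (P.card : ENNReal) * (ENNReal.ofReal ((t/2) ^ d) * volume (ball (0:EuclideanSpace ℝ (Fin d)) 1)) := by ring
      _ ≤ _ := key
  rw [← ENNReal.ofReal_natCast P.card, ← ENNReal.ofReal_mul (by positivity)] at key2
  exact (ENNReal.ofReal_le_ofReal_iff (by positivity)).mp key2

lemma grid_aux {d : ℕ} (m : ℕ) (v : EuclideanSpace ℝ (Fin d)) {s : ℝ} (hs : 0 < s) :
    ∃ u : (Fin d → Fin m) → EuclideanSpace ℝ (Fin d),
      (∀ k, dist (u k) v ≤ s * m * Real.sqrt d) ∧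
      (∀ k k', k ≠ k' → s ≤ dist (u k) (u k')) := by
  refine ⟨fun k => v + (WithLp.equiv 2 (Fin d → ℝ)).symm (fun i => s * ((k i : ℕ) : ℝ)), ?_, ?_⟩
  · intro k
    rw [EuclideanSpace.dist_eq]
    have hterm : ∀ i : Fin d,
        dist ((v + (WithLp.equiv 2 (Fin d → ℝ)).symm (fun i => s * ((k i : ℕ) : ℝ))) i) (v i) ^ 2
          ≤ (s * m) ^ 2 := by
      intro i
      have : (v + (WithLp.equiv 2 (Fin d → ℝ)).symm (fun i => s * ((k i : ℕ) : ℝ))) i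
          = v i + s * ((k i : ℕ) : ℝ) := rfl
      rw [this, Real.dist_eq]
      have h1 : |v i + s * ((k i : ℕ) : ℝ) - v i| = s * ((k i : ℕ) : ℝ) := by
        rw [add_sub_cancel_left, abs_of_nonneg (by positivity)]
      rw [h1]
      have h2 : s * ((k i : ℕ) : ℝ) ≤ s * m := by
        have : ((k i : ℕ) : ℝ) ≤ m := by exact_mod_cast (k i).isLt.le
        nlinarith
      have h3 : 0 ≤ s * ((k i : ℕ) : ℝ) := by positivity
      nlinarith
    calc Real.sqrt (∑ i, dist ((v + (WithLp.equiv 2 (Fin d → ℝ)).symm (fun i => s * ((k i : ℕ) : ℝ))) i) (v i) ^ 2)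
        ≤ Real.sqrt (∑ _i : Fin d, (s * m)^2) := by
          apply Real.sqrt_le_sqrt
          exact Finset.sum_le_sum fun i _ => hterm i
      _ = Real.sqrt ((d : ℝ) * (s*m)^2) := by rw [Finset.sum_const, Finset.card_univ]; simp [nsmul_eq_mul]
      _ = Real.sqrt d * (s * m) := by
          rw [Real.sqrt_mul (by positivity), Real.sqrt_sq (by positivity)]
      _ = s * m * Real.sqrt d := by ring
  · intro k k' hkk'
    obtain ⟨i₀, hi₀⟩ := Function.ne_iff.mp hkk'
    rw [EuclideanSpace.dist_eq]
    have hc : ∀ i : Fin d,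
        dist ((v + (WithLp.equiv 2 (Fin d → ℝ)).symm (fun i => s * ((k i : ℕ) : ℝ))) i)
             ((v + (WithLp.equiv 2 (Fin d → ℝ)).symm (fun i => s * ((k' i : ℕ) : ℝ))) i)
          = |s * ((k i : ℕ) : ℝ) - s * ((k' i : ℕ) : ℝ)| := by
      intro i
      have e1 : (v + (WithLp.equiv 2 (Fin d → ℝ)).symm (fun i => s * ((k i : ℕ) : ℝ))) i
          = v i + s * ((k i : ℕ) : ℝ) := rfl
      have e2 : (v + (WithLp.equiv 2 (Fin d → ℝ)).symm (fun i => s * ((k' i : ℕ) : ℝ))) i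
          = v i + s * ((k' i : ℕ) : ℝ) := rfl
      rw [e1, e2, Real.dist_eq]
      ring_nf
    have hi : s ^ 2 ≤ |s * ((k i₀ : ℕ) : ℝ) - s * ((k' i₀ : ℕ) : ℝ)| ^ 2 := by
      have hne : ((k i₀ : ℕ) : ℤ) ≠ ((k' i₀ : ℕ) : ℤ) := by
        exact_mod_cast fun h => hi₀ (Fin.val_injective h)
      have h1 : (1 : ℤ) ≤ |((k i₀ : ℕ) : ℤ) - ((k' i₀ : ℕ) : ℤ)| := Int.one_le_abs (sub_ne_zero.mpr hne)
      have h1' : (1 : ℝ) ≤ |((k i₀ : ℕ) : ℝ) - ((k' i₀ : ℕ) : ℝ)| := by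
        exact_mod_cast h1
      have : |s * ((k i₀ : ℕ) : ℝ) - s * ((k' i₀ : ℕ) : ℝ)|
          = s * |((k i₀ : ℕ) : ℝ) - ((k' i₀ : ℕ) : ℝ)| := by
        rw [← mul_sub, abs_mul, abs_of_pos hs]
      rw [this]
      nlinarith [mul_le_mul_of_nonneg_left h1' hs.le,
        abs_nonneg (((k i₀ : ℕ) : ℝ) - ((k' i₀ : ℕ) : ℝ)), hs.le]
    have hsum : s ^ 2 ≤ ∑ i, dist ((v + (WithLp.equiv 2 (Fin d → ℝ)).symm (fun i => s * ((k i : ℕ) : ℝ))) i)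
             ((v + (WithLp.equiv 2 (Fin d → ℝ)).symm (fun i => s * ((k' i : ℕ) : ℝ))) i) ^ 2 := by
      have hterm : s ^ 2 ≤ dist ((v + (WithLp.equiv 2 (Fin d → ℝ)).symm (fun i => s * ((k i : ℕ) : ℝ))) i₀)
             ((v + (WithLp.equiv 2 (Fin d → ℝ)).symm (fun i => s * ((k' i : ℕ) : ℝ))) i₀) ^ 2 := by
        rw [hc i₀]; exact hi
      exact le_trans hterm (Finset.single_le_sum
        (f := fun i => dist ((v + (WithLp.equiv 2 (Fin d → ℝ)).symm (fun i => s * ((k i : ℕ) : ℝ))) i)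
             ((v + (WithLp.equiv 2 (Fin d → ℝ)).symm (fun i => s * ((k' i : ℕ) : ℝ))) i) ^ 2)
        (fun i _ => sq_nonneg _) (Finset.mem_univ i₀))
    calc s = Real.sqrt (s ^ 2) := (Real.sqrt_sq hs.le).symm
      _ ≤ _ := Real.sqrt_le_sqrt hsum

/-- Modulus-of-continuity bound for isotonic maps: an isotonic map into a
bounded set is Lipschitz up to the sample density `ε`, with constant
proportional to `diam Q / ρ` and depending only on `d`. -/
theorem stmt6 (d : ℕ) :
    ∃ K : ℝ, 0 < K ∧
      ∀ (V Λ Q : Set (EuclideanSpace ℝ (Fin d)))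
        (ψ : EuclideanSpace ℝ (Fin d) → EuclideanSpace ℝ (Fin d)) (ρ ε : ℝ),
        0 < ρ → IsOpen V → Λ ⊆ V →
        (∃ v, Metric.ball v (ρ / 2) ⊆ V) →
        (∀ y ∈ V, ∃ x ∈ Λ, dist y x ≤ ε) →
        Bornology.IsBounded Q → (∀ x ∈ Λ, ψ x ∈ Q) →
        (∀ x ∈ Λ, ∀ y ∈ Λ, ∀ x' ∈ Λ, ∀ y' ∈ Λ,
          ‖x - y‖ < ‖x' - y'‖ → ‖ψ x - ψ y‖ ≤ ‖ψ x' - ψ y'‖) →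
        ∀ x ∈ Λ, ∀ x' ∈ Λ,
          ‖ψ x - ψ x'‖ ≤ K * (Metric.diam Q / ρ) * (‖x - x'‖ + ε) := by
  refine ⟨32 * (Real.sqrt d + 1), by positivity, ?_⟩
  rintro V Λ Q ψ ρ ε hρ hV hΛV ⟨v, hballV⟩ hdens hQb hψQ hiso x hx x' hx'
  set K := 32 * (Real.sqrt d + 1) with hKdef
  have hK0 : 0 < K := by positivity
  -- ε ≥ 0
  have hvV : v ∈ V := hballV (mem_ball_self (by linarith))
  obtain ⟨w₀, hw₀, hw₀d⟩ := hdens v hvV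
  have hε : 0 ≤ ε := le_trans dist_nonneg hw₀d
  set D := Metric.diam Q with hDdef
  have hD0 : 0 ≤ D := Metric.diam_nonneg
  set t := ‖ψ x - ψ x'‖ with htdef
  set r := ‖x - x'‖ with hrdef
  have hr0 : 0 ≤ r := norm_nonneg _
  have hre0 : 0 ≤ r + ε := by linarith
  have htD : t ≤ D := by
    rw [htdef, ← dist_eq_norm]
    exact Metric.dist_le_diam_of_mem hQb (hψQ x hx) (hψQ x' hx')
  have hRHS0 : 0 ≤ K * (D / ρ) * (r + ε) :=
    mul_nonneg (mul_nonneg hK0.le (div_nonneg hD0 hρ.le)) hre0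
  by_cases ht0 : t ≤ 0
  · linarith
  push_neg at ht0
  -- r > 0
  have hrpos : 0 < r := by
    rcases eq_or_ne x x' with rfl | hne
    · exfalso; rw [htdef, sub_self, norm_zero] at ht0; exact lt_irrefl 0 ht0
    · rw [hrdef]; exact norm_pos_iff.mpr (sub_ne_zero.mpr hne)
  have hd0 : d ≠ 0 := by
    rintro rfl
    have : x = x' := Subsingleton.elim x x'
    rw [hrdef, this, sub_self, norm_zero] at hrpos
    exact lt_irrefl 0 hrpos
  have hsd : 0 < Real.sqrt d := Real.sqrt_pos.mpr (by exact_mod_cast Nat.pos_of_ne_zero hd0)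
  set s := 2 * (r + ε) with hsdef
  have hs : 0 < s := by positivity
  set β := ρ / (4 * s * Real.sqrt d) with hβdef
  have hβden : 0 < 4 * s * Real.sqrt d := by positivity
  have hβρ : β * (4 * s * Real.sqrt d) = ρ := div_mul_cancel₀ _ hβden.ne'
  -- reduce goal
  rw [show K * (D / ρ) * (r + ε) = K * D * (r + ε) / ρ by ring, le_div_iff₀ hρ]
  by_cases hβ4 : β ≤ 4
  · -- ρ ≤ 16 s √d = 32 (r+ε) √d
    have hρle : ρ ≤ 32 * (r + ε) * Real.sqrt d := by
      have := hβρ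
      nlinarith [mul_le_mul_of_nonneg_right hβ4 hβden.le]
    -- t * ρ ≤ D * ρ ≤ D * 32 (r+ε) √d ≤ K * D * (r+ε)
    have h1 : t * ρ ≤ D * ρ := mul_le_mul_of_nonneg_right htD hρ.le
    have h2 : D * ρ ≤ D * (32 * (r + ε) * Real.sqrt d) := mul_le_mul_of_nonneg_left hρle hD0
    have h3 : D * (32 * (r + ε) * Real.sqrt d) ≤ K * D * (r + ε) := by
      have hKexp : K * D * (r + ε) = D * (32 * (r + ε) * Real.sqrt d) + 32 * (D * (r + ε)) := by
        rw [hKdef]; ring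
      rw [hKexp]
      linarith [mul_nonneg hD0 hre0]
    linarith
  · push_neg at hβ4
    set m := ⌊β⌋₊ with hmdef
    have hβ0 : 0 ≤ β := by positivity
    have hmβ : (m : ℝ) ≤ β := Nat.floor_le hβ0
    have hmlb : β - 1 < (m : ℝ) := Nat.sub_one_lt_floor β
    have hm2 : 2 ≤ m := by
      have : (2 : ℝ) ≤ (m : ℝ) := by linarith
      exact_mod_cast this
    obtain ⟨u, hufit, husep⟩ := grid_aux m v hs
    have hfit : s * m * Real.sqrt d ≤ ρ / 4 := by
      have h := mul_le_mul_of_nonneg_right hmβ hβden.le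
      rw [mul_comm] at h
      nlinarith [hβρ]
    have huV : ∀ k, u k ∈ V := fun k =>
      hballV (mem_ball.mpr (lt_of_le_of_lt (hufit k) (by linarith)))
    choose w hwΛ hwd using fun k => hdens (u k) (huV k)
    have hwsep : ∀ k k', k ≠ k' → r < dist (w k) (w k') := by
      intro k k' hkk'
      have h1 := husep k k' hkk'
      have h2 := hwd k
      have h3 := hwd k'
      have tri : dist (u k) (u k') ≤ dist (u k) (w k) + dist (w k) (w k') + dist (w k') (u k') :=
        dist_triangle4 _ _ _ _
      have h4 : dist (w k') (u k') = dist (u k') (w k') := dist_comm _ _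
      rw [hsdef] at h1
      linarith [h4 ▸ h3]
    have himg : ∀ k k', k ≠ k' → t ≤ dist (ψ (w k)) (ψ (w k')) := by
      intro k k' h
      have hlt : ‖x - x'‖ < ‖w k - w k'‖ := by
        rw [← dist_eq_norm, ← dist_eq_norm]
        exact hwsep k k' h
      have := hiso x hx x' hx' (w k) (hwΛ k) (w k') (hwΛ k') hlt
      rw [dist_eq_norm]
      exact this
    have hinj : Function.Injective (fun k => ψ (w k)) := by
      intro k k' h
      by_contra hne
      have h1 := himg k k' hne
      simp only at h
      rw [h, dist_self] at h1
      linarith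
    classical
    set P := Finset.image (fun k => ψ (w k)) Finset.univ with hPdef
    have hcard : P.card = m ^ d := by
      rw [hPdef, Finset.card_image_of_injective _ hinj, Finset.card_univ]
      simp
    have hsepP : ∀ p ∈ P, ∀ q ∈ P, p ≠ q → t ≤ dist p q := by
      intro p hp q hq hpq
      rw [hPdef, Finset.mem_image] at hp hq
      obtain ⟨k, -, rfl⟩ := hp
      obtain ⟨k', -, rfl⟩ := hq
      exact himg k k' (fun h => hpq (by rw [h]))
    have hdiamP : ∀ p ∈ P, ∀ q ∈ P, dist p q ≤ D := by
      intro p hp q hq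
      rw [hPdef, Finset.mem_image] at hp hq
      obtain ⟨k, -, rfl⟩ := hp
      obtain ⟨k', -, rfl⟩ := hq
      exact Metric.dist_le_diam_of_mem hQb (hψQ _ (hwΛ k)) (hψQ _ (hwΛ k'))
    have hpack := packing_aux hd0 P ht0 hD0 hsepP hdiamP
    rw [hcard] at hpack
    have hpow : ((m : ℝ) * (t / 2)) ^ d ≤ (D + t / 2) ^ d := by
      rw [mul_pow]
      calc (m : ℝ) ^ d * (t / 2) ^ d = ((m ^ d : ℕ) : ℝ) * (t / 2) ^ d := by push_cast; ring
        _ ≤ (D + t / 2) ^ d := hpack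
    have hmt : (m : ℝ) * (t / 2) ≤ D + t / 2 :=
      (pow_le_pow_iff_left₀ (by positivity) (by positivity) hd0).mp hpow
    -- (m - 1) ≥ β/2  and  t*(m-1) ≤ 2D
    have hm1 : β / 2 ≤ (m : ℝ) - 1 := by linarith
    have ht1 : t * ((m : ℝ) - 1) ≤ 2 * D := by nlinarith
    have ht2 : t * (β / 2) ≤ 2 * D :=
      le_trans (mul_le_mul_of_nonneg_left hm1 ht0.le) ht1
    -- t * ρ = t * β * (4 s √d) ≤ 4D*(4 s √d) = 16 D s √d = 32 D (r+ε) √d ≤ K D (r+ε)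
    have ht3 : t * β ≤ 4 * D := by linarith
    have ht4 : t * ρ ≤ 4 * D * (4 * s * Real.sqrt d) := by
      calc t * ρ = t * β * (4 * s * Real.sqrt d) := by rw [← hβρ]; ring
        _ ≤ 4 * D * (4 * s * Real.sqrt d) := mul_le_mul_of_nonneg_right ht3 hβden.le
    have ht5 : 4 * D * (4 * s * Real.sqrt d) = 32 * D * (r + ε) * Real.sqrt d := by
      rw [hsdef]; ring
    have h6 : 32 * D * (r + ε) * Real.sqrt d ≤ K * D * (r + ε) := by
      have hKexp : K * D * (r + ε) = 32 * D * (r + ε) * Real.sqrt d + 32 * (D * (r + ε)) := by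
        rw [hKdef]; ring
      rw [hKexp]
      linarith [mul_nonneg hD0 hre0]
    linarith
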